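/- (Criteria for characteristic generation values via Dini derivatives.) For every x₀ ∈ ℝ: (i) every c ∈ C(x₀) satisfies D̄₋Φ(x₀) ≤ c ≤ D̲₊Φ(x₀); in particular, if D̄₋Φ(x₀) > D̲₊Φ(x₀) then C(x₀) = ∅; (ii) if D̄₋Φ(x₀) < D̲₊Φ(x₀), then the open interval (D̄₋Φ(x₀), D̲₊Φ(x₀)) is contained in C(x₀), and C(x₀) is contained in the closed interval [D̄₋Φ(x₀), D̲₊Φ(x₀)]. -/

import Mathlib

open MeasureTheory Filter Set intervalIntegral Topology

noncomputable def eFun (f φ : ℝ → ℝ) (u x t : ℝ) : ℝ :=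
  t * (∫ s in (0:ℝ)..u, deriv (deriv f) s * (φ (x - t * deriv f s) - s))

def maxSet (f φ : ℝ → ℝ) (x t : ℝ) : Set ℝ :=
  {w : ℝ | ∀ v : ℝ, eFun f φ v x t ≤ eFun f φ w x t}

noncomputable def uPlus (f φ : ℝ → ℝ) (x t : ℝ) : ℝ := sInf (maxSet f φ x t)

noncomputable def uMinus (f φ : ℝ → ℝ) (x t : ℝ) : ℝ := sSup (maxSet f φ x t)

noncomputable def phiInt (φ : ℝ → ℝ) (x : ℝ) : ℝ := ∫ ξ in (0:ℝ)..x, φ ξ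

noncomputable def dUpperLeft (φ : ℝ → ℝ) (x₀ : ℝ) : ℝ :=
  Filter.limsup (fun l : ℝ => (phiInt φ (x₀ + l) - phiInt φ x₀) / l)
    (nhdsWithin 0 (Set.Iio 0))

noncomputable def dLowerRight (φ : ℝ → ℝ) (x₀ : ℝ) : ℝ :=
  Filter.liminf (fun l : ℝ => (phiInt φ (x₀ + l) - phiInt φ x₀) / l)
    (nhdsWithin 0 (Set.Ioi 0))

def charSet (f φ : ℝ → ℝ) (x₀ : ℝ) : Set ℝ :=
  {c : ℝ | ∃ t : ℝ, 0 < t ∧ c ∈ maxSet f φ (x₀ + t * deriv f c) t}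


section basics
variable {f φ : ℝ → ℝ} {M : ℝ}

lemma hf''cont (hf : ContDiff ℝ 2 f) : Continuous (deriv (deriv f)) := by
  have h1 : ContDiff ℝ 1 (deriv f) := by
    have := (contDiff_succ_iff_deriv (n := 1)).mp (by exact_mod_cast hf)
    exact this.2.2
  have := (contDiff_succ_iff_deriv (n := 0)).mp (by exact_mod_cast h1)
  exact this.2.2.continuous

lemma hf'diff (hf : ContDiff ℝ 2 f) : Differentiable ℝ (deriv f) :=
  ((contDiff_succ_iff_deriv (n := 1)).mp (by exact_mod_cast hf)).2.2.differentiable one_ne_zero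

lemma hf'cont (hf : ContDiff ℝ 2 f) : Continuous (deriv f) := (hf'diff hf).continuous

lemma f''_intInt (hf : ContDiff ℝ 2 f) (a b : ℝ) :
    IntervalIntegrable (deriv (deriv f)) volume a b :=
  (hf''cont hf).intervalIntegrable a b

lemma f'_sub_eq (hf : ContDiff ℝ 2 f) (a b : ℝ) :
    ∫ s in a..b, deriv (deriv f) s = deriv f b - deriv f a :=
  integral_deriv_eq_sub (fun x _ => (hf'diff hf x)) (f''_intInt hf a b)

lemma f'_strictMono (hf : ContDiff ℝ 2 f) (hconv : ∀ u : ℝ, 0 ≤ deriv (deriv f) u)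
    (hdeg : volume {u : ℝ | deriv (deriv f) u = 0} = 0) : StrictMono (deriv f) := by
  have hmono : Monotone (deriv f) := by
    apply monotone_of_deriv_nonneg (hf'diff hf) hconv
  intro a b hab
  rcases lt_or_eq_of_le (hmono hab.le) with h | h
  · exact h
  · exfalso
    have hconst : ∀ x ∈ Icc a b, deriv f x = deriv f a := by
      intro x hx
      exact le_antisymm (h ▸ hmono hx.2) (hmono hx.1)
    have hsub : Ioo a b ⊆ {u : ℝ | deriv (deriv f) u = 0} := by
      intro x hx
      have hev : deriv f =ᶠ[nhds x] (fun _ => deriv f a) := by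
        filter_upwards [Ioo_mem_nhds hx.1 hx.2] with y hy
        exact hconst y ⟨hy.1.le, hy.2.le⟩
      have : deriv (deriv f) x = deriv (fun _ => deriv f a) x := hev.deriv_eq
      simpa [deriv_const] using this
    have := measure_mono_null hsub hdeg
    rw [Real.volume_Ioo] at this
    simp only [ENNReal.ofReal_eq_zero, sub_nonpos] at this
    exact absurd this (not_le.mpr hab)

end basics

lemma bdd_meas_intInt {ψ : ℝ → ℝ} {C : ℝ} (hm : Measurable ψ) (hb : ∀ x, |ψ x| ≤ C)
    (a b : ℝ) : IntervalIntegrable ψ volume a b := by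
  rw [intervalIntegrable_iff]
  have : IsFiniteMeasure (volume.restrict (Set.uIoc a b)) :=
    ⟨by rw [Measure.restrict_apply_univ]; exact measure_Ioc_lt_top⟩
  exact (integrable_const C).mono' hm.aestronglyMeasurable.restrict
    (ae_of_all _ fun x => by simpa [Real.norm_eq_abs] using hb x)

section cov
variable {f φ : ℝ → ℝ} {M : ℝ}
  (hf : ContDiff ℝ 2 f)
  (hconv : ∀ u : ℝ, 0 ≤ deriv (deriv f) u)
  (hdeg : volume {u : ℝ | deriv (deriv f) u = 0} = 0)
  (hφmeas : Measurable φ) (hφbdd : ∀ x : ℝ, |φ x| ≤ M)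

-- from t1
lemma hf'diff' (hf : ContDiff ℝ 2 f) : Differentiable ℝ (deriv f) :=
  ((contDiff_succ_iff_deriv (n := 1)).mp (by exact_mod_cast hf)).2.2.differentiable one_ne_zero

include hf hconv in
lemma cov_le (x t : ℝ) (ht : 0 < t) {a b : ℝ} (hab : a ≤ b)
    (hanti : StrictAnti (fun s => x - t * deriv f s)) :
    t * ∫ s in a..b, deriv (deriv f) s * φ (x - t * deriv f s)
      = ∫ ξ in (x - t * deriv f b)..(x - t * deriv f a), φ ξ := by
  set g : ℝ → ℝ := fun s => x - t * deriv f s with hg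
  have hderiv : ∀ s ∈ Ioo a b, HasDerivWithinAt g (-(t * deriv (deriv f) s)) (Ioo a b) s := by
    intro s _
    exact ((((hf'diff' hf s).hasDerivAt).const_mul t).const_sub x).hasDerivWithinAt
  have himg : g '' Ioo a b = Ioo (g b) (g a) := by
    apply Subset.antisymm
    · rintro _ ⟨s, hs, rfl⟩
      exact ⟨hanti hs.2, hanti hs.1⟩
    · exact intermediate_value_Ioo' hab (Continuous.continuousOn (by
        exact (continuous_const.sub (continuous_const.mul ((hf'diff' hf).continuous)))))
  have key := integral_image_eq_integral_abs_deriv_smul (measurableSet_Ioo (a := a) (b := b))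
    hderiv (hanti.injective.injOn) φ
  rw [himg] at key
  have hgle : g b ≤ g a := by
    rcases eq_or_lt_of_le hab with h | h
    · simp [h]
    · exact (hanti h).le
  have L : ∫ ξ in g b..g a, φ ξ = ∫ ξ in Ioo (g b) (g a), φ ξ := by
    rw [integral_of_le hgle, integral_Ioc_eq_integral_Ioo]
  have R : ∫ s in a..b, deriv (deriv f) s * φ (g s)
      = ∫ s in Ioo a b, deriv (deriv f) s * φ (g s) := by
    rw [integral_of_le hab, integral_Ioc_eq_integral_Ioo]
  rw [L, R, key, ← MeasureTheory.integral_const_mul]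
  congr 1 with s
  rw [abs_neg, abs_of_nonneg (mul_nonneg ht.le (hconv s)), smul_eq_mul]
  ring

end cov

section key
variable {f φ : ℝ → ℝ} {M : ℝ}
  (hf : ContDiff ℝ 2 f)
  (hconv : ∀ u : ℝ, 0 ≤ deriv (deriv f) u)
  (hdeg : volume {u : ℝ | deriv (deriv f) u = 0} = 0)
  (hφmeas : Measurable φ) (hφbdd : ∀ x : ℝ, |φ x| ≤ M)

include hf hconv hdeg hφmeas hφbdd in
lemma keyId (x₀ c u t : ℝ) (ht : 0 < t) :
    eFun f φ c (x₀ + t * deriv f c) t - eFun f φ u (x₀ + t * deriv f c) t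
      = (phiInt φ (x₀ + t * (deriv f c - deriv f u)) - phiInt φ x₀
          - c * (t * (deriv f c - deriv f u)))
        + t * ∫ s in c..u, deriv (deriv f) s * (s - c) := by
  set x : ℝ := x₀ + t * deriv f c with hx
  set l : ℝ := t * (deriv f c - deriv f u) with hl
  have hφg_meas : Measurable (fun s : ℝ => φ (x - t * deriv f s)) :=
    hφmeas.comp ((continuous_const.sub (continuous_const.mul (hf'cont hf))).measurable)
  have hφg_int : ∀ a b : ℝ, IntervalIntegrable (fun s : ℝ => φ (x - t * deriv f s)) volume a b :=
    fun a b => bdd_meas_intInt hφg_meas (fun s => hφbdd _) a b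
  have hI1 : ∀ a b : ℝ, IntervalIntegrable
      (fun s : ℝ => deriv (deriv f) s * φ (x - t * deriv f s)) volume a b :=
    fun a b => (hφg_int a b).continuousOn_mul (hf''cont hf).continuousOn
  have hI2 : ∀ a b : ℝ, IntervalIntegrable (fun s : ℝ => deriv (deriv f) s * s) volume a b :=
    fun a b => (((hf''cont hf).mul continuous_id).intervalIntegrable a b)
  have hI0 : ∀ a b : ℝ, IntervalIntegrable
      (fun s : ℝ => deriv (deriv f) s * (φ (x - t * deriv f s) - s)) volume a b := by
    intro a b
    have := ((hφg_int a b).sub ((continuous_id.intervalIntegrable a b))).continuousOn_mul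
      (hf''cont hf).continuousOn
    exact this
  -- step 1 : difference as integral over u..c
  have step1 : eFun f φ c x t - eFun f φ u x t
      = t * ∫ s in u..c, deriv (deriv f) s * (φ (x - t * deriv f s) - s) := by
    unfold eFun
    rw [← mul_sub, integral_interval_sub_left (hI0 0 c) (hI0 0 u)]
  -- step 2 : split
  have step2 : (∫ s in u..c, deriv (deriv f) s * (φ (x - t * deriv f s) - s))
      = (∫ s in u..c, deriv (deriv f) s * φ (x - t * deriv f s))
        - ∫ s in u..c, deriv (deriv f) s * s := by
    rw [← integral_sub (hI1 u c) (hI2 u c)]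
    congr 1 with s; ring
  -- anti
  have hanti : StrictAnti (fun s : ℝ => x - t * deriv f s) := by
    intro p q hpq
    have := f'_strictMono hf hconv hdeg hpq
    simp only
    nlinarith
  -- step 3 : change of variables
  have step3 : t * (∫ s in u..c, deriv (deriv f) s * φ (x - t * deriv f s))
      = phiInt φ (x₀ + l) - phiInt φ x₀ := by
    have hgc : x - t * deriv f c = x₀ := by rw [hx]; ring
    have hgu : x - t * deriv f u = x₀ + l := by rw [hx, hl]; ring
    have hcov : t * (∫ s in u..c, deriv (deriv f) s * φ (x - t * deriv f s))
        = ∫ ξ in (x - t * deriv f c)..(x - t * deriv f u), φ ξ := by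
      rcases le_total u c with h | h
      · exact cov_le (φ := φ) hf hconv x t ht h hanti
      · have := cov_le (φ := φ) hf hconv x t ht h hanti
        rw [integral_symm c u, integral_symm (x - t * deriv f u) (x - t * deriv f c)]
        linarith [this]
    rw [hcov, hgc, hgu]
    unfold phiInt
    rw [← integral_interval_sub_left (bdd_meas_intInt hφmeas hφbdd 0 (x₀+l))
      (bdd_meas_intInt hφmeas hφbdd 0 x₀)]
  -- step 4 : polynomial part
  have step4 : (∫ s in u..c, deriv (deriv f) s * s)
      = -(∫ s in c..u, deriv (deriv f) s * (s - c)) + c * (deriv f c - deriv f u) := by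
    have e1 : (∫ s in u..c, deriv (deriv f) s * s)
        = (∫ s in u..c, deriv (deriv f) s * (s - c)) + c * ∫ s in u..c, deriv (deriv f) s := by
      rw [← intervalIntegral.integral_const_mul, ← integral_add (f := fun s => deriv (deriv f) s * (s - c))
        (g := fun s => c * deriv (deriv f) s)
        (((hf''cont hf).mul (by continuity)).intervalIntegrable u c)
        ((continuous_const.mul (hf''cont hf)).intervalIntegrable u c)]
      congr 1 with s; ring
    rw [e1, integral_symm, f'_sub_eq hf]
  rw [step1, step2, mul_sub, step3, step4]
  ring

end key

section bounds
variable {f φ : ℝ → ℝ} {M : ℝ}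
  (hf : ContDiff ℝ 2 f)
  (hconv : ∀ u : ℝ, 0 ≤ deriv (deriv f) u)

include hf hconv in
lemma intNonneg (c u : ℝ) : 0 ≤ ∫ s in c..u, deriv (deriv f) s * (s - c) := by
  rcases le_total c u with h | h
  · apply intervalIntegral.integral_nonneg h
    intro s hs
    exact mul_nonneg (hconv s) (by linarith [hs.1])
  · rw [integral_symm u c]
    have h0 : 0 ≤ ∫ s in u..c, -(deriv (deriv f) s * (s - c)) := by
      apply intervalIntegral.integral_nonneg h
      intro s hs
      have := mul_nonpos_of_nonneg_of_nonpos (hconv s) (show s - c ≤ 0 by linarith [hs.2])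
      linarith
    rw [intervalIntegral.integral_neg] at h0
    linarith

include hf hconv in
lemma intUB_right (c u : ℝ) (h : c ≤ u) :
    (∫ s in c..u, deriv (deriv f) s * (s - c)) ≤ (u - c) * (deriv f u - deriv f c) := by
  have h1 : (∫ s in c..u, deriv (deriv f) s * (s - c))
      ≤ ∫ s in c..u, deriv (deriv f) s * (u - c) := by
    apply intervalIntegral.integral_mono_on h
      (((hf''cont hf).mul (by continuity)).intervalIntegrable c u)
      (((hf''cont hf).mul (by continuity)).intervalIntegrable c u)
    intro s hs
    exact mul_le_mul_of_nonneg_left (by linarith [hs.2]) (hconv s)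
  calc (∫ s in c..u, deriv (deriv f) s * (s - c)) ≤ _ := h1
    _ = (u - c) * (deriv f u - deriv f c) := by
        rw [intervalIntegral.integral_mul_const, f'_sub_eq hf]; ring

include hf hconv in
lemma intUB_left (c u : ℝ) (h : u ≤ c) :
    (∫ s in c..u, deriv (deriv f) s * (s - c)) ≤ (c - u) * (deriv f c - deriv f u) := by
  have h1 : (∫ s in u..c, deriv (deriv f) s * (u - c))
      ≤ ∫ s in u..c, deriv (deriv f) s * (s - c) := by
    apply intervalIntegral.integral_mono_on h
      (((hf''cont hf).mul (by continuity)).intervalIntegrable u c)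
      (((hf''cont hf).mul (by continuity)).intervalIntegrable u c)
    intro s hs
    exact mul_le_mul_of_nonneg_left (by linarith [hs.1]) (hconv s)
  have h2 : (∫ s in u..c, deriv (deriv f) s * (u - c))
      = (u - c) * (deriv f c - deriv f u) := by
    rw [intervalIntegral.integral_mul_const, f'_sub_eq hf]; ring
  rw [integral_symm u c]
  nlinarith [h1, h2]

include hf hconv in
lemma intLB_right (c u K : ℝ) (hK : 0 ≤ K) (h : c + 2*K ≤ u) :
    2*K*(deriv f u - deriv f (c + 2*K)) ≤ ∫ s in c..u, deriv (deriv f) s * (s - c) := by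
  have hsplit : (∫ s in c..(c+2*K), deriv (deriv f) s * (s - c))
      + (∫ s in (c+2*K)..u, deriv (deriv f) s * (s - c))
      = ∫ s in c..u, deriv (deriv f) s * (s - c) :=
    intervalIntegral.integral_add_adjacent_intervals
      (((hf''cont hf).mul (by continuity)).intervalIntegrable _ _)
      (((hf''cont hf).mul (by continuity)).intervalIntegrable _ _)
  have h1 : 0 ≤ ∫ s in c..(c+2*K), deriv (deriv f) s * (s - c) := by
    apply intervalIntegral.integral_nonneg (by linarith)
    intro s hs
    exact mul_nonneg (hconv s) (by linarith [hs.1])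
  have h2 : (∫ s in (c+2*K)..u, deriv (deriv f) s * (2*K))
      ≤ ∫ s in (c+2*K)..u, deriv (deriv f) s * (s - c) := by
    apply intervalIntegral.integral_mono_on h
      (((hf''cont hf).mul (by continuity)).intervalIntegrable _ _)
      (((hf''cont hf).mul (by continuity)).intervalIntegrable _ _)
    intro s hs
    exact mul_le_mul_of_nonneg_left (by linarith [hs.1]) (hconv s)
  have h3 : (∫ s in (c+2*K)..u, deriv (deriv f) s * (2*K))
      = (deriv f u - deriv f (c+2*K)) * (2*K) := by
    rw [intervalIntegral.integral_mul_const, f'_sub_eq hf]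
  nlinarith [hsplit, h1, h2, h3]

include hf hconv in
lemma intLB_left (c u K : ℝ) (hK : 0 ≤ K) (h : u ≤ c - 2*K) :
    2*K*(deriv f (c - 2*K) - deriv f u) ≤ ∫ s in c..u, deriv (deriv f) s * (s - c) := by
  have hsplit : (∫ s in u..(c-2*K), deriv (deriv f) s * (s - c))
      + (∫ s in (c-2*K)..c, deriv (deriv f) s * (s - c))
      = ∫ s in u..c, deriv (deriv f) s * (s - c) :=
    intervalIntegral.integral_add_adjacent_intervals
      (((hf''cont hf).mul (by continuity)).intervalIntegrable _ _)
      (((hf''cont hf).mul (by continuity)).intervalIntegrable _ _)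
  have h1 : (∫ s in (c-2*K)..c, deriv (deriv f) s * (s - c)) ≤ 0 := by
    have h0 : 0 ≤ ∫ s in (c-2*K)..c, -(deriv (deriv f) s * (s - c)) := by
      apply intervalIntegral.integral_nonneg (by linarith)
      intro s hs
      have := mul_nonpos_of_nonneg_of_nonpos (hconv s) (show s - c ≤ 0 by linarith [hs.2])
      linarith
    rw [intervalIntegral.integral_neg] at h0
    linarith
  have h2 : (∫ s in u..(c-2*K), deriv (deriv f) s * (s - c))
      ≤ ∫ s in u..(c-2*K), deriv (deriv f) s * (-(2*K)) := by
    apply intervalIntegral.integral_mono_on h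
      (((hf''cont hf).mul (by continuity)).intervalIntegrable _ _)
      (((hf''cont hf).mul (by continuity)).intervalIntegrable _ _)
    intro s hs
    exact mul_le_mul_of_nonneg_left (by linarith [hs.2]) (hconv s)
  have h3 : (∫ s in u..(c-2*K), deriv (deriv f) s * (-(2*K)))
      = (deriv f (c-2*K) - deriv f u) * (-(2*K)) := by
    rw [intervalIntegral.integral_mul_const, f'_sub_eq hf]
  have h4 := integral_symm u c (f := fun s => deriv (deriv f) s * (s - c)) (μ := volume)
  nlinarith [hsplit, h1, h2, h3, h4]

end bounds

section phibound
variable {φ : ℝ → ℝ} {M : ℝ} (hφmeas : Measurable φ) (hφbdd : ∀ x : ℝ, |φ x| ≤ M)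

include hφmeas hφbdd in
lemma phi_diff_eq (x₀ l : ℝ) :
    phiInt φ (x₀ + l) - phiInt φ x₀ = ∫ ξ in x₀..(x₀ + l), φ ξ := by
  unfold phiInt
  rw [← intervalIntegral.integral_interval_sub_left (bdd_meas_intInt hφmeas hφbdd 0 (x₀+l))
    (bdd_meas_intInt hφmeas hφbdd 0 x₀)]

include hφmeas hφbdd in
lemma phi_diff_abs (x₀ l : ℝ) : |phiInt φ (x₀ + l) - phiInt φ x₀| ≤ M * |l| := by
  rw [phi_diff_eq hφmeas hφbdd]
  have := intervalIntegral.norm_integral_le_of_norm_le_const (a := x₀) (b := x₀ + l)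
    (f := φ) (C := M) (fun x _ => by simpa [Real.norm_eq_abs] using hφbdd x)
  simpa [Real.norm_eq_abs] using this

include hφmeas hφbdd in
lemma q_abs (x₀ : ℝ) {l : ℝ} (hl : l ≠ 0) :
    |(phiInt φ (x₀ + l) - phiInt φ x₀) / l| ≤ M := by
  rw [abs_div, div_le_iff₀ (abs_pos.2 hl)]
  exact phi_diff_abs hφmeas hφbdd x₀ l

end phibound

section main
variable {f φ : ℝ → ℝ} {M : ℝ}
  (hf : ContDiff ℝ 2 f)
  (hconv : ∀ u : ℝ, 0 ≤ deriv (deriv f) u)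
  (hdeg : volume {u : ℝ | deriv (deriv f) u = 0} = 0)
  (hφmeas : Measurable φ) (hφbdd : ∀ x : ℝ, |φ x| ≤ M)

include hf hconv hdeg hφmeas hφbdd in
lemma partI (x₀ c t : ℝ) (ht : 0 < t)
    (hmax : c ∈ maxSet f φ (x₀ + t * deriv f c) t) :
    dUpperLeft φ x₀ ≤ c ∧ c ≤ dLowerRight φ x₀ := by
  have hM : 0 ≤ M := le_trans (abs_nonneg _) (hφbdd 0)
  have hSM := f'_strictMono hf hconv hdeg
  have hineq : ∀ u : ℝ, 0 ≤ (phiInt φ (x₀ + t * (deriv f c - deriv f u)) - phiInt φ x₀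
      - c * (t * (deriv f c - deriv f u)))
      + t * ∫ s in c..u, deriv (deriv f) s * (s - c) := by
    intro u
    have h1 := hmax u
    have hk := keyId (M := M) hf hconv hdeg hφmeas hφbdd x₀ c u t ht
    change eFun f φ u (x₀ + t * deriv f c) t ≤ eFun f φ c (x₀ + t * deriv f c) t at h1
    linarith [hk, h1]
  -- boundedness facts for the quotient
  have hbddL : ∀ᶠ l in 𝓝[<] (0:ℝ),
      |(phiInt φ (x₀ + l) - phiInt φ x₀) / l| ≤ M := by
    filter_upwards [self_mem_nhdsWithin] with l hl
    exact q_abs hφmeas hφbdd x₀ (ne_of_lt hl)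
  have hbddR : ∀ᶠ l in 𝓝[>] (0:ℝ),
      |(phiInt φ (x₀ + l) - phiInt φ x₀) / l| ≤ M := by
    filter_upwards [self_mem_nhdsWithin] with l hl
    exact q_abs hφmeas hφbdd x₀ (ne_of_gt hl)
  constructor
  · -- limsup ≤ c
    have hcob : IsCoboundedUnder (· ≤ ·) (𝓝[<] (0:ℝ))
        (fun l => (phiInt φ (x₀ + l) - phiInt φ x₀) / l) := by
      apply Filter.IsBoundedUnder.isCoboundedUnder_le
      exact isBoundedUnder_of_eventually_ge (a := -M)
        (hbddL.mono fun l hl => neg_le_of_abs_le hl)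
    have key : ∀ ε > (0:ℝ), dUpperLeft φ x₀ ≤ c + ε := by
      intro ε hε
      apply Filter.limsup_le_of_le hcob
      set δ := t * (deriv f (c + ε) - deriv f c) with hδ
      have hδpos : 0 < δ := mul_pos ht (sub_pos.2 (hSM (by linarith)))
      filter_upwards [Ioo_mem_nhdsLT_of_mem
        (show (0:ℝ) ∈ Ioc (-δ) 0 from ⟨by linarith, le_rfl⟩)] with l hl
      obtain ⟨hl1, hl2⟩ := hl
      have hlt0 : l < 0 := hl2
      have htarget : deriv f c - l / t ∈ Icc (deriv f c) (deriv f (c + ε)) := by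
        constructor
        · have h0 : l / t < 0 := div_neg_of_neg_of_pos hlt0 ht
          linarith
        · have h2 : -l / t ≤ deriv f (c + ε) - deriv f c := by
            rw [div_le_iff₀ ht]; nlinarith [hl1]
          rw [neg_div] at h2
          linarith
      obtain ⟨u, hu, hfu⟩ := intermediate_value_Icc (by linarith : c ≤ c + ε)
        ((hf'cont hf).continuousOn) htarget
      have hlu : t * (deriv f c - deriv f u) = l := by
        rw [hfu]; field_simp; ring
      have h0 := hineq u
      rw [hlu] at h0
      have hcu : c ≤ u := hu.1
      have hub := intUB_right hf hconv c u hcu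
      have h3 : t * (deriv f u - deriv f c) = -l := by linarith [hlu]
      have h4 : t * (∫ s in c..u, deriv (deriv f) s * (s - c)) ≤ (u - c) * -l := by
        calc t * (∫ s in c..u, deriv (deriv f) s * (s - c))
            ≤ t * ((u - c) * (deriv f u - deriv f c)) := mul_le_mul_of_nonneg_left hub ht.le
          _ = (u - c) * (t * (deriv f u - deriv f c)) := by ring
          _ = (u - c) * -l := by rw [h3]
      have h5 : (u - c) * -l ≤ ε * -l :=
        mul_le_mul_of_nonneg_right (by linarith [hu.2]) (by linarith)
      rw [div_le_iff_of_neg hlt0]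
      linarith
    by_contra hcon
    push_neg at hcon
    have := key ((dUpperLeft φ x₀ - c)/2) (by linarith)
    linarith
  · -- c ≤ liminf
    have hcob : IsCoboundedUnder (· ≥ ·) (𝓝[>] (0:ℝ))
        (fun l => (phiInt φ (x₀ + l) - phiInt φ x₀) / l) := by
      apply Filter.IsBoundedUnder.isCoboundedUnder_ge
      exact isBoundedUnder_of_eventually_le (a := M)
        (hbddR.mono fun l hl => le_of_abs_le hl)
    have key : ∀ ε > (0:ℝ), c - ε ≤ dLowerRight φ x₀ := by
      intro ε hε
      apply Filter.le_liminf_of_le hcob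
      set δ := t * (deriv f c - deriv f (c - ε)) with hδ
      have hδpos : 0 < δ := mul_pos ht (sub_pos.2 (hSM (by linarith)))
      filter_upwards [Ioo_mem_nhdsGT_of_mem
        (show (0:ℝ) ∈ Ico 0 δ from ⟨le_rfl, hδpos⟩)] with l hl
      obtain ⟨hl1, hl2⟩ := hl
      have htarget : deriv f c - l / t ∈ Icc (deriv f (c - ε)) (deriv f c) := by
        constructor
        · have h2 : l / t ≤ deriv f c - deriv f (c - ε) := by
            rw [div_le_iff₀ ht]; nlinarith [hl2]
          linarith
        · have h0 : 0 < l / t := div_pos hl1 ht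
          linarith
      obtain ⟨u, hu, hfu⟩ := intermediate_value_Icc (by linarith : c - ε ≤ c)
        ((hf'cont hf).continuousOn) htarget
      have hlu : t * (deriv f c - deriv f u) = l := by
        rw [hfu]; field_simp; ring
      have h0 := hineq u
      rw [hlu] at h0
      have huc : u ≤ c := hu.2
      have hub := intUB_left hf hconv c u huc
      have h4 : t * (∫ s in c..u, deriv (deriv f) s * (s - c)) ≤ (c - u) * l := by
        calc t * (∫ s in c..u, deriv (deriv f) s * (s - c))
            ≤ t * ((c - u) * (deriv f c - deriv f u)) := mul_le_mul_of_nonneg_left hub ht.le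
          _ = (c - u) * (t * (deriv f c - deriv f u)) := by ring
          _ = (c - u) * l := by rw [hlu]
      have h5 : (c - u) * l ≤ ε * l :=
        mul_le_mul_of_nonneg_right (by linarith [hu.1]) hl1.le
      rw [le_div_iff₀ hl1]
      linarith
    by_contra hcon
    push_neg at hcon
    have := key ((c - dLowerRight φ x₀)/2) (by linarith)
    linarith

include hf hconv hdeg hφmeas hφbdd in
lemma partII (x₀ c : ℝ) (h1 : dUpperLeft φ x₀ < c) (h2 : c < dLowerRight φ x₀) :
    c ∈ charSet f φ x₀ := by
  have hM : 0 ≤ M := le_trans (abs_nonneg _) (hφbdd 0)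
  have hSM := f'_strictMono hf hconv hdeg
  have hbddL : IsBoundedUnder (· ≤ ·) (𝓝[<] (0:ℝ))
      (fun l => (phiInt φ (x₀ + l) - phiInt φ x₀) / l) := by
    apply isBoundedUnder_of_eventually_le (a := M)
    filter_upwards [self_mem_nhdsWithin] with l hl
    exact le_of_abs_le (q_abs hφmeas hφbdd x₀ (ne_of_lt hl))
  have hbddR : IsBoundedUnder (· ≥ ·) (𝓝[>] (0:ℝ))
      (fun l => (phiInt φ (x₀ + l) - phiInt φ x₀) / l) := by
    apply isBoundedUnder_of_eventually_ge (a := -M)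
    filter_upwards [self_mem_nhdsWithin] with l hl
    exact neg_le_of_abs_le (q_abs hφmeas hφbdd x₀ (ne_of_gt hl))
  have hevL := eventually_lt_of_limsup_lt h1 hbddL
  have hevR := eventually_lt_of_lt_liminf h2 hbddR
  obtain ⟨a, ha, hIooL⟩ := mem_nhdsLT_iff_exists_Ioo_subset.mp hevL
  obtain ⟨b, hb, hIooR⟩ := mem_nhdsGT_iff_exists_Ioo_subset.mp hevR
  have ha0 : a < 0 := ha
  have hb0 : 0 < b := hb
  set δ := min (-a) b with hδdef
  have hδpos : 0 < δ := lt_min (by linarith) hb0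
  have hG : ∀ l : ℝ, |l| < δ → 0 ≤ phiInt φ (x₀ + l) - phiInt φ x₀ - c * l := by
    intro l hl
    rcases lt_trichotomy l 0 with hneg | hzero | hpos
    · have hmem : l ∈ Ioo a 0 := by
        constructor
        · have : -l < δ := by rw [abs_of_neg hneg] at hl; exact hl
          have : -l < -a := lt_of_lt_of_le this (min_le_left _ _)
          linarith
        · exact hneg
      have hq : (phiInt φ (x₀ + l) - phiInt φ x₀) / l < c := hIooL hmem
      have hql : (phiInt φ (x₀ + l) - phiInt φ x₀)
          = ((phiInt φ (x₀ + l) - phiInt φ x₀) / l) * l :=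
        (div_mul_cancel₀ _ (ne_of_lt hneg)).symm
      have hprod := mul_nonneg
        (show 0 ≤ c - (phiInt φ (x₀ + l) - phiInt φ x₀) / l by linarith)
        (show 0 ≤ -l by linarith)
      nlinarith [hql, hprod]
    · subst hzero; simp
    · have hmem : l ∈ Ioo 0 b := by
        constructor
        · exact hpos
        · have : l < δ := by rw [abs_of_pos hpos] at hl; exact hl
          exact lt_of_lt_of_le this (min_le_right _ _)
      have hq : c < (phiInt φ (x₀ + l) - phiInt φ x₀) / l := hIooR hmem
      have hql : (phiInt φ (x₀ + l) - phiInt φ x₀)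
          = ((phiInt φ (x₀ + l) - phiInt φ x₀) / l) * l :=
        (div_mul_cancel₀ _ (ne_of_gt hpos)).symm
      have hprod := mul_nonneg
        (show 0 ≤ (phiInt φ (x₀ + l) - phiInt φ x₀) / l - c by linarith)
        (show 0 ≤ l by linarith)
      nlinarith [hql, hprod]
  set K := M + |c| + 1 with hK
  have hKpos : 0 < K := by positivity
  set B := max (deriv f (c + 2*K) - deriv f c) (deriv f c - deriv f (c - 2*K)) with hB
  have hBmaxL : deriv f (c + 2*K) - deriv f c ≤ B := le_max_left _ _
  have hBmaxR : deriv f c - deriv f (c - 2*K) ≤ B := le_max_right _ _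
  have hBpos : 0 < B := lt_max_of_lt_left (sub_pos.2 (hSM (by linarith)))
  set t := δ / (2*B) with ht'
  have ht : 0 < t := div_pos hδpos (by linarith)
  have hdel : 2*B*t = δ := by rw [ht']; field_simp
  refine ⟨t, ht, ?_⟩
  intro u
  have hk := keyId (M := M) hf hconv hdeg hφmeas hφbdd x₀ c u t ht
  show eFun f φ u (x₀ + t * deriv f c) t ≤ eFun f φ c (x₀ + t * deriv f c) t
  suffices h : 0 ≤ (phiInt φ (x₀ + t * (deriv f c - deriv f u)) - phiInt φ x₀
      - c * (t * (deriv f c - deriv f u)))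
      + t * ∫ s in c..u, deriv (deriv f) s * (s - c) by linarith [hk]
  set l := t * (deriv f c - deriv f u) with hl
  rcases lt_or_ge |l| δ with hcase | hcase
  · have g1 := hG l hcase
    have g2 : 0 ≤ t * ∫ s in c..u, deriv (deriv f) s * (s - c) :=
      mul_nonneg ht.le (intNonneg hf hconv c u)
    linarith
  · have habs : |phiInt φ (x₀ + l) - phiInt φ x₀| ≤ M * |l| := phi_diff_abs hφmeas hφbdd x₀ l
    have hcl : c * l ≤ |c| * |l| := by
      rw [← abs_mul]; exact le_abs_self _
    have hG2 : -((M + |c|) * |l|) ≤ phiInt φ (x₀ + l) - phiInt φ x₀ - c * l := by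
      have h1' : -(M * |l|) ≤ phiInt φ (x₀ + l) - phiInt φ x₀ := neg_le_of_abs_le habs
      nlinarith
    suffices hI : K * |l| ≤ t * ∫ s in c..u, deriv (deriv f) s * (s - c) by
      have hlpos : 0 < |l| := lt_of_lt_of_le hδpos hcase
      nlinarith [hG2, hI, hlpos]
    have hlne : l ≠ 0 := by
      intro h
      rw [h, abs_zero] at hcase
      linarith
    rcases lt_or_gt_of_ne hlne with hneg | hpos
    · -- l < 0 : u to the right
      have hfu : deriv f c < deriv f u := by
        by_contra hcon
        push_neg at hcon
        have h0 : 0 ≤ t * (deriv f c - deriv f u) := mul_nonneg ht.le (by linarith)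
        rw [← hl] at h0
        linarith
      have hteq : t * (deriv f u - deriv f c) = |l| := by
        rw [abs_of_neg hneg, hl]; ring
      have h2B : 2*B ≤ deriv f u - deriv f c := by
        have h' : t * (2*B) ≤ t * (deriv f u - deriv f c) := by
          rw [hteq]
          calc t * (2*B) = 2*B*t := by ring
            _ = δ := hdel
            _ ≤ |l| := hcase
        exact le_of_mul_le_mul_left h' ht
      have hfu2 : deriv f (c + 2*K) < deriv f u := by
        have hcc : deriv f c < deriv f (c + 2*K) := hSM (by linarith)
        linarith
      have hu2K : c + 2*K ≤ u := (hSM.lt_iff_lt.mp hfu2).le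
      have hLB := intLB_right hf hconv c u K hKpos.le hu2K
      have hstep : K * (deriv f u - deriv f c) ≤ 2*K*(deriv f u - deriv f (c + 2*K)) := by
        have := mul_le_mul_of_nonneg_left
          (show deriv f u - deriv f c ≤ 2*(deriv f u - deriv f (c + 2*K)) by linarith) hKpos.le
        linarith
      calc K * |l| = t * (K * (deriv f u - deriv f c)) := by rw [← hteq]; ring
        _ ≤ t * (2*K*(deriv f u - deriv f (c + 2*K))) :=
            mul_le_mul_of_nonneg_left hstep ht.le
        _ ≤ t * ∫ s in c..u, deriv (deriv f) s * (s - c) :=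
            mul_le_mul_of_nonneg_left hLB ht.le
    · -- l > 0 : u to the left
      have hfu : deriv f u < deriv f c := by
        by_contra hcon
        push_neg at hcon
        have h0 : t * (deriv f c - deriv f u) ≤ 0 :=
          mul_nonpos_of_nonneg_of_nonpos ht.le (by linarith)
        rw [← hl] at h0
        linarith
      have hteq : t * (deriv f c - deriv f u) = |l| := by
        rw [abs_of_pos hpos, hl]
      have h2B : 2*B ≤ deriv f c - deriv f u := by
        have h' : t * (2*B) ≤ t * (deriv f c - deriv f u) := by
          rw [hteq]
          calc t * (2*B) = 2*B*t := by ring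
            _ = δ := hdel
            _ ≤ |l| := hcase
        exact le_of_mul_le_mul_left h' ht
      have hfu2 : deriv f u < deriv f (c - 2*K) := by
        have hcc : deriv f (c - 2*K) < deriv f c := hSM (by linarith)
        linarith
      have hu2K : u ≤ c - 2*K := (hSM.lt_iff_lt.mp hfu2).le
      have hLB := intLB_left hf hconv c u K hKpos.le hu2K
      have hstep : K * (deriv f c - deriv f u) ≤ 2*K*(deriv f (c - 2*K) - deriv f u) := by
        have := mul_le_mul_of_nonneg_left
          (show deriv f c - deriv f u ≤ 2*(deriv f (c - 2*K) - deriv f u) by linarith) hKpos.le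
        linarith
      calc K * |l| = t * (K * (deriv f c - deriv f u)) := by rw [← hteq]; ring
        _ ≤ t * (2*K*(deriv f (c - 2*K) - deriv f u)) :=
            mul_le_mul_of_nonneg_left hstep ht.le
        _ ≤ t * ∫ s in c..u, deriv (deriv f) s * (s - c) :=
            mul_le_mul_of_nonneg_left hLB ht.le

end main


/-- criteria for characteristic generation values via Dini derivatives. -/
theorem stmt10_characteristic_generation_criteria
    (f φ : ℝ → ℝ) (M : ℝ)
    (hf : ContDiff ℝ 2 f)
    (hconv : ∀ u : ℝ, 0 ≤ deriv (deriv f) u)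
    (hdeg : volume {u : ℝ | deriv (deriv f) u = 0} = 0)
    (hφmeas : Measurable φ)
    (hφbdd : ∀ x : ℝ, |φ x| ≤ M) :
    ∀ x₀ : ℝ,
      (∀ c ∈ charSet f φ x₀, dUpperLeft φ x₀ ≤ c ∧ c ≤ dLowerRight φ x₀) ∧
      (dLowerRight φ x₀ < dUpperLeft φ x₀ → charSet f φ x₀ = ∅) ∧
      (dUpperLeft φ x₀ < dLowerRight φ x₀ →
        Set.Ioo (dUpperLeft φ x₀) (dLowerRight φ x₀) ⊆ charSet f φ x₀ ∧
        charSet f φ x₀ ⊆ Set.Icc (dUpperLeft φ x₀) (dLowerRight φ x₀)) := by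
  intro x₀
  have hi : ∀ c ∈ charSet f φ x₀, dUpperLeft φ x₀ ≤ c ∧ c ≤ dLowerRight φ x₀ := by
    rintro c ⟨t, ht, hmax⟩
    exact partI hf hconv hdeg hφmeas hφbdd x₀ c t ht hmax
  refine ⟨hi, ?_, ?_⟩
  · intro hlt
    rw [Set.eq_empty_iff_forall_notMem]
    intro c hc
    obtain ⟨h1, h2⟩ := hi c hc
    linarith
  · intro hlt
    constructor
    · intro c hc
      exact partII hf hconv hdeg hφmeas hφbdd x₀ c hc.1 hc.2
    · intro c hc
      exact ⟨(hi c hc).1, (hi c hc).2⟩
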